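/- Let A > 2 and let (u_n)_{n∈ℤ} satisfy u_{n+1} = A·u_n − u_{n−1}. Write A = 2·cosh(ℓ) with ℓ > 0. If additionally u_n > 2 for all n ∈ ℤ, then there exist y > 0 and x ∈ ℝ with u_n = 2y·cosh(nℓ − x) for all n ∈ ℤ. -/

import Mathlib

theorem cosh_form_of_positive_solution
    (A ℓ : ℝ) (hA : A > 2) (hℓ : ℓ > 0) (hAℓ : A = 2 * Real.cosh ℓ)
    (u : ℤ → ℝ) (hrec : ∀ n : ℤ, u (n + 1) = A * u n - u (n - 1))
    (hpos : ∀ n : ℤ, u n > 2) :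
    ∃ y > (0 : ℝ), ∃ x : ℝ, ∀ n : ℤ, u n = 2 * y * Real.cosh ((n : ℝ) * ℓ - x) := by
  set q : ℝ := Real.exp ℓ with hqdef
  have hq1 : 1 < q :=
    lt_of_lt_of_le (by linarith : (1:ℝ) < ℓ + 1) (Real.add_one_le_exp ℓ)
  have hq0 : 0 < q := lt_trans one_pos hq1
  have hqne : q ≠ 0 := ne_of_gt hq0
  have hA' : A = q + q⁻¹ := by
    rw [hAℓ, Real.cosh_eq, ← Real.exp_neg, ← hqdef]
    ring
  have hd : q - q⁻¹ > 0 := by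
    have : q⁻¹ < 1 := inv_lt_one_of_one_lt₀ hq1
    linarith
  have hdne : q - q⁻¹ ≠ 0 := ne_of_gt hd
  set L : ℝ := (u 1 - u 0 * q⁻¹) / (q - q⁻¹) with hLdef
  set M : ℝ := (u 0 * q - u 1) / (q - q⁻¹) with hMdef
  have step : ∀ m : ℤ, A * (L * q ^ m + M * q ^ (-m)) - (L * q ^ (m-1) + M * q ^ (-(m-1)))
      = L * q ^ (m+1) + M * q ^ (-(m+1)) := by
    intro m
    have e1 : q ^ (m+1) = q ^ m * q := by rw [zpow_add₀ hqne, zpow_one]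
    have e2 : q ^ (m-1) = q ^ m / q := by rw [zpow_sub₀ hqne, zpow_one]
    have e3 : q ^ (-(m+1)) = q ^ (-m) / q := by
      rw [show (-(m+1)) = -m - 1 by ring, zpow_sub₀ hqne, zpow_one]
    have e4 : q ^ (-(m-1)) = q ^ (-m) * q := by
      rw [show (-(m-1)) = -m + 1 by ring, zpow_add₀ hqne, zpow_one]
    rw [e1, e2, e3, e4, hA']
    field_simp
    ring
  have step2 : ∀ m : ℤ, A * (L * q ^ m + M * q ^ (-m)) - (L * q ^ (m+1) + M * q ^ (-(m+1)))
      = L * q ^ (m-1) + M * q ^ (-(m-1)) := by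
    intro m
    have := step m
    linarith
  -- the general formula
  have key : ∀ n : ℤ, u n = L * q ^ n + M * q ^ (-n) := by
    have main : ∀ n : ℤ, u n = L * q ^ n + M * q ^ (-n) ∧
        u (n + 1) = L * q ^ (n + 1) + M * q ^ (-(n + 1)) := by
      intro n
      induction n using Int.induction_on with
      | zero =>
        constructor
        · simp only [zpow_zero, neg_zero]
          rw [hLdef, hMdef, mul_one, mul_one, ← add_div,
            show u 1 - u 0 * q⁻¹ + (u 0 * q - u 1) = u 0 * (q - q⁻¹) by ring,
            mul_div_assoc, div_self hdne, mul_one]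
        · simp only [zero_add, zpow_one, zpow_neg, zpow_one]
          rw [hLdef, hMdef, div_mul_eq_mul_div, div_mul_eq_mul_div, ← add_div]
          rw [show (u 1 - u 0 * q⁻¹) * q + (u 0 * q - u 1) * q⁻¹ = u 1 * (q - q⁻¹) by
            field_simp; ring]
          rw [mul_div_assoc, div_self hdne, mul_one]
      | succ k ih =>
        refine ⟨ih.2, ?_⟩
        have h2 := hrec ((k : ℤ) + 1)
        rw [show ((k:ℤ) + 1 - 1) = (k:ℤ) by ring] at h2
        rw [h2, ih.2, ← step ((k:ℤ)+1), show ((k:ℤ) + 1 - 1) = (k:ℤ) by ring, ih.1]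
      | pred k ih =>
        have h2 := hrec (-(k : ℤ))
        have h3 : u (-(k:ℤ) - 1) = A * u (-(k:ℤ)) - u (-(k:ℤ) + 1) := by linarith
        constructor
        · rw [h3, ih.1, ih.2]
          exact step2 (-(k:ℤ))
        · rw [show (-(k:ℤ) - 1 + 1) = -(k:ℤ) by ring]
          exact ih.1
    exact fun n => (main n).1
  -- positivity of L and M
  have hL : 0 < L := by
    by_contra h
    push_neg at h
    obtain ⟨n, hn⟩ := pow_unbounded_of_one_lt (|M| / 2) hq1
    have h1 : u n ≤ M * q ^ (-(n:ℤ)) := by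
      rw [key n]
      nlinarith [zpow_pos hq0 (n:ℤ)]
    have h2 : M * q ^ (-(n:ℤ)) ≤ |M| * q ^ (-(n:ℤ)) := by
      have := zpow_pos hq0 (-(n:ℤ))
      nlinarith [le_abs_self M]
    have h3 : |M| * q ^ (-(n:ℤ)) < 2 := by
      rw [zpow_neg, zpow_natCast]
      rw [div_lt_iff₀ (by norm_num : (0:ℝ) < 2)] at hn
      rw [mul_inv_lt_iff₀ (pow_pos hq0 n)]
      linarith
    have := hpos n
    linarith
  have hM : 0 < M := by
    by_contra h
    push_neg at h
    obtain ⟨n, hn⟩ := pow_unbounded_of_one_lt (|L| / 2) hq1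
    have h1 : u (-(n:ℤ)) ≤ L * q ^ (-(n:ℤ)) := by
      rw [key (-(n:ℤ))]
      simp only [neg_neg]
      nlinarith [zpow_pos hq0 (n:ℤ)]
    have h2 : L * q ^ (-(n:ℤ)) ≤ |L| * q ^ (-(n:ℤ)) := by
      have := zpow_pos hq0 (-(n:ℤ))
      nlinarith [le_abs_self L]
    have h3 : |L| * q ^ (-(n:ℤ)) < 2 := by
      rw [zpow_neg, zpow_natCast]
      rw [div_lt_iff₀ (by norm_num : (0:ℝ) < 2)] at hn
      rw [mul_inv_lt_iff₀ (pow_pos hq0 n)]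
      linarith
    have := hpos (-(n:ℤ))
    linarith
  -- assemble
  refine ⟨Real.sqrt (L * M), Real.sqrt_pos.mpr (mul_pos hL hM), Real.log (Real.sqrt (M / L)), ?_⟩
  intro n
  have hsq : (0:ℝ) < Real.sqrt (M / L) := Real.sqrt_pos.mpr (div_pos hM hL)
  have hsqne : Real.sqrt (M / L) ≠ 0 := ne_of_gt hsq
  have hex : Real.exp (Real.log (Real.sqrt (M / L))) = Real.sqrt (M / L) :=
    Real.exp_log hsq
  have hexn : Real.exp ((n:ℝ) * ℓ) = q ^ n := by
    rw [← Real.rpow_intCast q n, Real.rpow_def_of_pos hq0, hqdef, Real.log_exp, mul_comm]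
  have hqnne : q ^ n ≠ 0 := zpow_ne_zero n hqne
  rw [key n, Real.cosh_eq, Real.exp_sub, neg_sub, Real.exp_sub, hexn, hex]
  have hy1 : Real.sqrt (L * M) * (Real.sqrt (M / L))⁻¹ = L := by
    rw [← Real.sqrt_inv, ← Real.sqrt_mul (le_of_lt (mul_pos hL hM))]
    rw [show L * M * (M / L)⁻¹ = L * M * (L / M) by rw [inv_div],
      show L * M * (L / M) = L^2 * (M / M) by ring, div_self (ne_of_gt hM), mul_one]
    exact Real.sqrt_sq (le_of_lt hL)
  have hy2 : Real.sqrt (L * M) * Real.sqrt (M / L) = M := by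
    rw [← Real.sqrt_mul (le_of_lt (mul_pos hL hM))]
    rw [show L * M * (M / L) = M^2 * (L / L) by ring, div_self (ne_of_gt hL), mul_one]
    exact Real.sqrt_sq (le_of_lt hM)
  have expand : ∀ s t w : ℝ, s ≠ 0 → w ≠ 0 →
      2 * t * ((w / s + s / w) / 2) = t * s⁻¹ * w + t * s * w⁻¹ := by
    intro s t w hs hw
    field_simp
  rw [expand _ _ _ hsqne hqnne, hy1, hy2, ← zpow_neg]
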